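/- Let S(A) = {a_n} be an independent Stanley sequence, let k ≥ κ(A), set c = a_{2^k} and A_k = {a_0, a_1, ..., a_{2^k − 1}}, and suppose a_{2^k − 1} ≥ λ(A) + ω(A). Then for all integers x < y, the sets A_k + x and A_k + y jointly cover every integer in the set ([2y − x, c + 2y − x) \ (O(A) + 2y − x)) ∪ (O(A) + c + 2y − x). -/
import Mathlib


/-- A set of integers is 3-free if it contains no 3-term arithmetic progression. -/
def ThreeFreeSet (S : Set ℤ) : Prop :=
  ∀ x ∈ S, ∀ y ∈ S, ∀ z ∈ S, x < y → y < z → x + z ≠ 2 * y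

/-- `a` is the Stanley sequence generated greedily from the finite 3-free set `A`
of nonnegative integers containing 0: `a` first enumerates `A` in increasing order,
and for `n ≥ |A|`, `a n` is the least integer exceeding `a (n-1)` keeping the
set of terms so far 3-free. -/
def IsStanleySeq (A : Finset ℤ) (a : ℕ → ℤ) : Prop :=
  (0 : ℤ) ∈ A ∧ (∀ x ∈ A, 0 ≤ x) ∧ ThreeFreeSet ↑A ∧
  StrictMono a ∧ (∀ i < A.card, a i ∈ A) ∧
  ∀ n, A.card ≤ n →
    IsLeast {m : ℤ | a (n - 1) < m ∧ ThreeFreeSet (a '' Set.Iio n ∪ {m})} (a n)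

/-- The two defining conditions of an independent Stanley sequence,
for a given λ and κ. -/
def IndepParams (a : ℕ → ℤ) (lam : ℤ) (κ : ℕ) : Prop :=
  ∀ k, κ ≤ k →
    (∀ i < 2 ^ k, a (2 ^ k + i) = a (2 ^ k) + a i) ∧
    a (2 ^ k) = 2 * a (2 ^ k - 1) + 1 - lam

/-- A Stanley sequence is independent if `IndepParams` holds for some λ and κ. -/
def Independent (a : ℕ → ℤ) : Prop := ∃ lam κ, IndepParams a lam κ

/-- κ(A): the minimal κ witnessing independence. -/
noncomputable def kappa (a : ℕ → ℤ) : ℕ := sInf {κ | ∃ lam, IndepParams a lam κ}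

/-- λ(A), recovered from the defining equation at k = κ(A). -/
noncomputable def lambdaA (a : ℕ → ℤ) : ℤ :=
  2 * a (2 ^ kappa a - 1) + 1 - a (2 ^ kappa a)

/-- The repeat factor ρ(A) = a_{2^{κ(A)}}. -/
noncomputable def rho (a : ℕ → ℤ) : ℤ := a (2 ^ kappa a)

/-- The scaling factor α(A), satisfying a_{2^k} = α·3^k for all k ≥ κ(A). -/
noncomputable def scalingFactor (a : ℕ → ℤ) : ℚ :=
  (a (2 ^ kappa a) : ℚ) / 3 ^ kappa a

/-- An integer `x` is covered by a set `S` if there are `y < z < x` in `S`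
with `y, z, x` in arithmetic progression. -/
def Covers (S : Set ℤ) (x : ℤ) : Prop :=
  ∃ y z, y ∈ S ∧ z ∈ S ∧ y < z ∧ z < x ∧ 2 * z = y + x

/-- An integer `x` is jointly covered by `S` and `T` if there are `y < z < x`
with `y ∈ S`, `z ∈ T`, and `y, z, x` in arithmetic progression. -/
def JointlyCovers (S T : Set ℤ) (x : ℤ) : Prop :=
  ∃ y z, y ∈ S ∧ z ∈ T ∧ y < z ∧ z < x ∧ 2 * z = y + x

/-- O(A): nonnegative integers neither in the Stanley sequence nor covered by it. -/
def OSet (a : ℕ → ℤ) : Set ℤ :=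
  {x | 0 ≤ x ∧ x ∉ Set.range a ∧ ¬ Covers (Set.range a) x}

/-- ω(A): the maximum element of O(A). -/
noncomputable def omegaA (a : ℕ → ℤ) : ℤ := sSup (OSet a)

/-- The translate `S + t` of a set of integers. -/
def shift (S : Set ℤ) (t : ℤ) : Set ℤ := (· + t) '' S

/-- A triadic number: a rational whose denominator in lowest terms is a power of 3. -/
def IsTriadic (q : ℚ) : Prop := ∃ j : ℕ, q.den = 3 ^ j


private lemma threeFree_mono {S T : Set ℤ} (h : S ⊆ T) (hT : ThreeFreeSet T) :
    ThreeFreeSet S := fun x hx y hy z hz => hT x (h hx) y (h hy) z (h hz)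

private lemma stanley_a0 (A : Finset ℤ) (a : ℕ → ℤ) (hA : IsStanleySeq A a) : a 0 = 0 := by
  obtain ⟨hA0, hApos, _, hmono, hmem, _⟩ := hA
  have hcard : 0 < A.card := Finset.card_pos.2 ⟨0, hA0⟩
  have himg : (Finset.range A.card).image a = A := by
    apply Finset.eq_of_subset_of_card_le
    · intro x hx
      obtain ⟨i, hi, rfl⟩ := Finset.mem_image.1 hx
      exact hmem i (Finset.mem_range.1 hi)
    · rw [Finset.card_image_of_injective _ hmono.injective, Finset.card_range]
  obtain ⟨i, _, hi⟩ := Finset.mem_image.1 (himg ▸ hA0)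
  have h1 : a 0 ≤ a i := hmono.monotone (Nat.zero_le i)
  have h2 : 0 ≤ a 0 := hApos _ (hmem 0 hcard)
  omega

private lemma image_threeFree (A : Finset ℤ) (a : ℕ → ℤ) (hA : IsStanleySeq A a) (n : ℕ) :
    ThreeFreeSet (a '' Set.Iio n) := by
  induction n with
  | zero =>
    rintro x ⟨i, hi, -⟩
    exact absurd (Set.mem_Iio.mp hi) (Nat.not_lt_zero i)
  | succ n ih =>
    rcases le_or_gt (n + 1) A.card with h | h
    · refine threeFree_mono ?_ hA.2.2.1
      rintro x ⟨i, hi, rfl⟩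
      exact hA.2.2.2.2.1 i (lt_of_lt_of_le hi h)
    · have hg := hA.2.2.2.2.2 n (by omega)
      have h2 := hg.1.2
      have hIio : Set.Iio (n + 1) = insert n (Set.Iio n) := by
        ext m
        simp only [Set.mem_Iio, Set.mem_insert_iff]
        omega
      have hset : a '' Set.Iio (n + 1) = a '' Set.Iio n ∪ {a n} := by
        rw [hIio, Set.image_insert_eq, Set.union_singleton]
      rw [hset]
      exact h2

private lemma range_threeFree (A : Finset ℤ) (a : ℕ → ℤ) (hA : IsStanleySeq A a) :
    ThreeFreeSet (Set.range a) := by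
  intro x hx y hy z hz hxy hyz
  obtain ⟨i, rfl⟩ := hx; obtain ⟨j, rfl⟩ := hy; obtain ⟨l, rfl⟩ := hz
  exact image_threeFree A a hA (max i (max j l) + 1)
    _ ⟨i, Set.mem_Iio.mpr (Nat.lt_succ_of_le (le_max_left _ _)), rfl⟩
    _ ⟨j, Set.mem_Iio.mpr (Nat.lt_succ_of_le (le_trans (le_max_left _ _) (le_max_right _ _))), rfl⟩
    _ ⟨l, Set.mem_Iio.mpr (Nat.lt_succ_of_le (le_trans (le_max_right _ _) (le_max_right _ _))), rfl⟩
    hxy hyz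

private lemma le_apply_aux (a : ℕ → ℤ) (hmono : StrictMono a) (h0 : a 0 = 0) (n : ℕ) :
    (n : ℤ) ≤ a n := by
  induction n with
  | zero => omega
  | succ n ih =>
    have := hmono (show n < n + 1 by omega)
    push_cast
    omega

private lemma oset_bound (A : Finset ℤ) (a : ℕ → ℤ) (hA : IsStanleySeq A a) :
    ∀ w ∈ OSet a, w < a (A.card - 1) := by
  intro w hw
  obtain ⟨hw0, hwr, hwc⟩ := hw
  by_contra hcon
  push_neg at hcon
  have h0 := stanley_a0 A a hA
  have hmono := hA.2.2.2.1
  have hex : ∃ n, w < a n := by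
    refine ⟨(w + 1).toNat, ?_⟩
    have := le_apply_aux a hmono h0 (w + 1).toNat
    omega
  classical
  set N := Nat.find hex with hNdef
  have hNlt : w < a N := Nat.find_spec hex
  have hNmin : ∀ m, m < N → a m ≤ w := fun m hm => not_lt.1 (Nat.find_min hex hm)
  have hcard : 0 < A.card := Finset.card_pos.2 ⟨0, hA.1⟩
  have hNcard : A.card ≤ N := by
    rcases Nat.lt_or_ge N A.card with h | h
    · exfalso
      have h2 : N ≤ A.card - 1 := by omega
      have h3 := hmono.monotone h2
      omega
    · exact h
  have hg := hA.2.2.2.2.2 N hNcard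
  have hlt : a (N - 1) < w := by
    have h1 : a (N - 1) ≤ w := hNmin (N - 1) (by omega)
    have h2 : a (N - 1) ≠ w := fun h => hwr ⟨N - 1, h⟩
    omega
  have hnot : ¬ ThreeFreeSet (a '' Set.Iio N ∪ {w}) := by
    intro h3
    have := hg.2 ⟨hlt, h3⟩
    omega
  unfold ThreeFreeSet at hnot
  push_neg at hnot
  obtain ⟨p, hp, q, hq, r, hr, hpq, hqr, heq⟩ := hnot
  have hsmall : ∀ s ∈ a '' Set.Iio N, s < w := by
    rintro s ⟨m, hm, rfl⟩
    have h1 := hNmin m hm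
    have h2 : a m ≠ w := fun h => hwr ⟨m, h⟩
    omega
  have hrw : r = w := by
    rcases hr with hr | hr
    · exfalso
      rcases hp with hp | hp
      · rcases hq with hq | hq
        · exact image_threeFree A a hA N p hp q hq r hr hpq hqr heq
        · have := hsmall r hr
          simp only [Set.mem_singleton_iff] at hq
          omega
      · have := hsmall r hr
        simp only [Set.mem_singleton_iff] at hp
        omega
    · simpa using hr
  subst hrw
  have hpim : p ∈ a '' Set.Iio N := by
    rcases hp with hp | hp
    · exact hp
    · simp only [Set.mem_singleton_iff] at hp
      omega
  have hqim : q ∈ a '' Set.Iio N := by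
    rcases hq with hq | hq
    · exact hq
    · simp only [Set.mem_singleton_iff] at hq
      omega
  obtain ⟨mp, _, hmp⟩ := hpim
  obtain ⟨mq, _, hmq⟩ := hqim
  exact hwc ⟨p, q, ⟨mp, hmp⟩, ⟨mq, hmq⟩, hpq, hqr, by omega⟩

private lemma indep_lambda (a : ℕ → ℤ) (hInd : Independent a) :
    IndepParams a (lambdaA a) (kappa a) := by
  obtain ⟨lam, κ, h⟩ := hInd
  have hne : {κ | ∃ lam, IndepParams a lam κ}.Nonempty := ⟨κ, lam, h⟩
  have hmem : ∃ lam', IndepParams a lam' (kappa a) := Nat.sInf_mem hne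
  obtain ⟨lam', h'⟩ := hmem
  have heq : lambdaA a = lam' := by
    have h2 := (h' (kappa a) le_rfl).2
    unfold lambdaA
    omega
  rw [heq]
  exact h'

private lemma crux (A : Finset ℤ) (a : ℕ → ℤ) (hA : IsStanleySeq A a)
    (hInd : Independent a) (k : ℕ) (hk : kappa a ≤ k)
    (hbound : lambdaA a + omegaA a ≤ a (2 ^ k - 1)) :
    ∀ w ∈ OSet a, ∃ i j : ℕ, i < 2 ^ k ∧ j < 2 ^ k ∧ a i < a j ∧
      2 * a j = a i + (a (2 ^ k) + w) := by
  intro w hw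
  obtain ⟨hw0, hwr, hwc⟩ := hw
  have hmono := hA.2.2.2.1
  have h0 := stanley_a0 A a hA
  have hP := indep_lambda a hInd
  have hpow : 0 < 2 ^ k := Nat.two_pow_pos k
  have hpow2 : 2 ^ (k + 1) = 2 * 2 ^ k := by ring
  have hrec : ∀ i < 2 ^ k, a (2 ^ k + i) = a (2 ^ k) + a i := fun i hi => (hP k hk).1 i hi
  have hck : a (2 ^ k) = 2 * a (2 ^ k - 1) + 1 - lambdaA a := (hP k hk).2
  have hck1 : a (2 ^ (k + 1)) = 2 * a (2 ^ (k + 1) - 1) + 1 - lambdaA a :=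
    (hP (k + 1) (le_trans hk (Nat.le_succ k))).2
  have hidx : 2 ^ k + (2 ^ k - 1) = 2 ^ (k + 1) - 1 := by omega
  have h2k1 : a (2 ^ (k + 1) - 1) = a (2 ^ k) + a (2 ^ k - 1) := by
    have h3 := hrec (2 ^ k - 1) (by omega)
    rwa [hidx] at h3
  have h3c : a (2 ^ (k + 1)) = 3 * a (2 ^ k) := by
    rw [hck1, h2k1]
    omega
  have hbddO : BddAbove (OSet a) := ⟨a (A.card - 1), fun w' hw' => (oset_bound A a hA w' hw').le⟩
  have hwω : w ≤ omegaA a := le_csSup hbddO ⟨hw0, hwr, hwc⟩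
  have hwpos : 0 < w := by
    rcases eq_or_lt_of_le hw0 with h | h
    · exact absurd ⟨0, by omega⟩ hwr
    · exact h
  have ha2k1_nonneg : 0 ≤ a (2 ^ k - 1) := by
    have := hmono.monotone (Nat.zero_le (2 ^ k - 1))
    omega
  have hwle : w ≤ a (2 ^ k - 1) - lambdaA a := by omega
  have hlt1 : a (2 ^ k - 1) < a (2 ^ k) := hmono (by omega)
  have hcpos : 0 < a (2 ^ k) := by
    have := hmono hpow
    omega
  have hwc2 : w < a (2 ^ k) := by omega
  have hvnr : a (2 ^ k) + w ∉ Set.range a := by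
    rintro ⟨n, hn⟩
    rcases Nat.lt_or_ge n (2 ^ k) with h | h
    · have h1 : n ≤ 2 ^ k - 1 := by omega
      have h2 := hmono.monotone h1
      omega
    · rcases Nat.lt_or_ge n (2 ^ (k + 1)) with h2 | h2
      · have h3 : n - 2 ^ k < 2 ^ k := by omega
        have h4 := hrec (n - 2 ^ k) h3
        have h5 : 2 ^ k + (n - 2 ^ k) = n := by omega
        rw [h5] at h4
        exact hwr ⟨n - 2 ^ k, by omega⟩
      · have := hmono.monotone h2
        omega
  have hvO : a (2 ^ k) + w ∉ OSet a := by
    intro hv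
    have h9 : a (2 ^ k) + w ≤ omegaA a := le_csSup hbddO hv
    omega
  have hcov : Covers (Set.range a) (a (2 ^ k) + w) := by
    by_contra hnc
    exact hvO ⟨by omega, hvnr, hnc⟩
  obtain ⟨p, q, ⟨mp, hmp⟩, ⟨mq, hmq⟩, hpq, hqv, heq⟩ := hcov
  have hp0 : 0 ≤ p := by
    have := hmono.monotone (Nat.zero_le mp)
    omega
  rcases Nat.lt_or_ge mq (2 ^ k) with hmqk | hmqk
  · refine ⟨mp, mq, ?_, hmqk, by omega, by omega⟩
    have h6 : mp < mq := hmono.lt_iff_lt.1 (by omega)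
    omega
  · rcases Nat.lt_or_ge mq (2 ^ (k + 1)) with hmq2 | hmq2
    · exfalso
      have hj' : mq - 2 ^ k < 2 ^ k := by omega
      have hq' := hrec (mq - 2 ^ k) hj'
      have h7 : 2 ^ k + (mq - 2 ^ k) = mq := by omega
      rw [h7] at hq'
      have hjw : a (mq - 2 ^ k) < w := by omega
      rcases Nat.lt_or_ge mp (2 ^ k) with hmpk | hmpk
      · have h1 : a mp ≤ a (2 ^ k - 1) := hmono.monotone (by omega)
        have h2 : 0 ≤ a (mq - 2 ^ k) := by
          have := hmono.monotone (Nat.zero_le (mq - 2 ^ k))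
          omega
        omega
      · have hmp2 : mp < 2 ^ (k + 1) := by
          by_contra hcon
          push_neg at hcon
          have := hmono.monotone hcon
          omega
        have hi' : mp - 2 ^ k < 2 ^ k := by omega
        have hp' := hrec (mp - 2 ^ k) hi'
        have h5 : 2 ^ k + (mp - 2 ^ k) = mp := by omega
        rw [h5] at hp'
        exact hwc ⟨a (mp - 2 ^ k), a (mq - 2 ^ k), ⟨mp - 2 ^ k, rfl⟩, ⟨mq - 2 ^ k, rfl⟩,
          by omega, hjw, by omega⟩
    · exfalso
      have := hmono.monotone hmq2
      omega

/-- Lemma 3.2(b): for `x < y`, the sets `A_k + x` and `A_k + y`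
jointly cover `([2y−x, c+2y−x) \ (O(A) + 2y − x)) ∪ (O(A) + c + 2y − x)`. -/
theorem cover_part_b (A : Finset ℤ) (a : ℕ → ℤ)
    (hA : IsStanleySeq A a) (hInd : Independent a) (k : ℕ) (hk : kappa a ≤ k)
    (c : ℤ) (hc : c = a (2 ^ k))
    (Ak : Set ℤ) (hAk : Ak = a '' Set.Iio (2 ^ k))
    (hbound : lambdaA a + omegaA a ≤ a (2 ^ k - 1)) :
    ∀ x y : ℤ, x < y →
      ∀ z ∈ (Set.Ico (2 * y - x) (c + 2 * y - x) \ shift (OSet a) (2 * y - x)) ∪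
          shift (OSet a) (c + 2 * y - x),
        JointlyCovers (shift Ak x) (shift Ak y) z := by
  subst hc
  subst hAk
  intro x y hxy z hz
  have hmono := hA.2.2.2.1
  have h0 := stanley_a0 A a hA
  have hpow : 0 < 2 ^ k := Nat.two_pow_pos k
  rcases hz with ⟨⟨hz1, hz2⟩, hz3⟩ | hz
  · -- z ∈ [2y-x, c+2y-x) \ (O + 2y - x)
    have hw0 : 0 ≤ z - (2 * y - x) := by omega
    have hwO : z - (2 * y - x) ∉ OSet a := by
      intro hwO
      exact hz3 ⟨z - (2 * y - x), hwO, (by omega : z - (2 * y - x) + (2 * y - x) = z)⟩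
    have hcases : z - (2 * y - x) ∈ Set.range a ∨ Covers (Set.range a) (z - (2 * y - x)) := by
      by_cases h1 : z - (2 * y - x) ∈ Set.range a
      · exact Or.inl h1
      by_cases h2 : Covers (Set.range a) (z - (2 * y - x))
      · exact Or.inr h2
      exact absurd ⟨hw0, h1, h2⟩ hwO
    rcases hcases with ⟨m, hm⟩ | ⟨p, q, ⟨mp, hmp⟩, ⟨mq, hmq⟩, hpq, hqw, heq⟩
    · have hmk : m < 2 ^ k := by
        by_contra hc2
        push_neg at hc2
        have := hmono.monotone hc2
        omega
      exact ⟨a m + x, a m + y, ⟨a m, ⟨m, hmk, rfl⟩, rfl⟩, ⟨a m, ⟨m, hmk, rfl⟩, rfl⟩,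
        by omega, by omega, by omega⟩
    · have hqk : mq < 2 ^ k := by
        by_contra hc2
        push_neg at hc2
        have := hmono.monotone hc2
        omega
      have hpk : mp < 2 ^ k := by
        have h6 : mp < mq := hmono.lt_iff_lt.1 (by omega)
        omega
      exact ⟨a mp + x, a mq + y, ⟨a mp, ⟨mp, hpk, rfl⟩, rfl⟩, ⟨a mq, ⟨mq, hqk, rfl⟩, rfl⟩,
        by omega, by omega, by omega⟩
  · -- z ∈ O + c + 2y - x
    obtain ⟨w, hw, hwz⟩ := hz
    have hwz' : w + (a (2 ^ k) + 2 * y - x) = z := hwz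
    obtain ⟨i, j, hik, hjk, hij, heq⟩ := crux A a hA hInd k hk hbound w hw
    have hjle : a j ≤ a (2 ^ k - 1) := hmono.monotone (by omega)
    have hw0 : 0 ≤ w := hw.1
    have hlt1 : a (2 ^ k - 1) < a (2 ^ k) := hmono (by omega)
    exact ⟨a i + x, a j + y, ⟨a i, ⟨i, hik, rfl⟩, rfl⟩, ⟨a j, ⟨j, hjk, rfl⟩, rfl⟩,
      by omega, by omega, by omega⟩
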